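/- arXiv:1710.11565 — 3 statements merged into one kernel-verified Lean document; each statement's English description precedes it below -/
import Mathlib

section
/- For all α, β, γ ∈ ℕ and all p, q ∈ G, the sequence of double cosets j ↦ K[α]·(p · Θ_j[β] · q)·K[γ] is eventually constant: there exists N such that for all j, k ≥ N, the sets K[α]·(p · Θ_j[β] · q)·K[γ] and K[α]·(p · Θ_k[β] · q)·K[γ] coincide. -/
open Equiv

abbrev P3 := Equiv.Perm ℕ × Equiv.Perm ℕ × Equiv.Perm ℕ

/-- The subgroup of finitely supported permutations of `ℕ`. -/
def Sinf : Subgroup (Equiv.Perm ℕ) where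
  carrier := {g | {x | g x ≠ x}.Finite}
  one_mem' := by
    show Set.Finite {x | (1 : Equiv.Perm ℕ) x ≠ x}
    convert Set.finite_empty
    ext x; simp
  mul_mem' {f g} hf hg := by
    apply Set.Finite.subset (hf.union hg)
    intro x hx
    simp only [Set.mem_setOf_eq, Set.mem_union, Equiv.Perm.mul_apply] at hx ⊢
    by_contra hc
    push_neg at hc
    rw [hc.2] at hx
    exact hx hc.1
  inv_mem' {g} hg := by
    apply Set.Finite.subset hg
    intro x hx
    simp only [Set.mem_setOf_eq] at hx ⊢
    intro h
    apply hx
    apply g.injective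
    rw [← Equiv.Perm.mul_apply, mul_inv_cancel, Equiv.Perm.one_apply, h]

/-- Permutations fixing every point `< α`. -/
def fixLt (α : ℕ) : Subgroup (Equiv.Perm ℕ) where
  carrier := {g | ∀ i < α, g i = i}
  one_mem' := fun _ _ => rfl
  mul_mem' {f g} hf hg := fun i hi => by
    simp only [Equiv.Perm.mul_apply, hg i hi, hf i hi]
  inv_mem' {g} hg := fun i hi => by
    apply g.injective
    rw [← Equiv.Perm.mul_apply, mul_inv_cancel, Equiv.Perm.one_apply, hg i hi]

/-- The diagonal embedding of `Perm ℕ` into the triple product. -/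
def diag3 : Equiv.Perm ℕ →* P3 where
  toFun h := (h, h, h)
  map_one' := rfl
  map_mul' _ _ := rfl

/-- `G = S_∞ × S_∞ × S_∞`. -/
def Ggrp : Subgroup P3 := Sinf.prod (Sinf.prod Sinf)

/-- `K[α]`: diagonal triples `(h,h,h)` with `h ∈ S_∞` fixing `0,…,α-1`. -/
def KK (α : ℕ) : Subgroup P3 := Subgroup.map diag3 (Sinf ⊓ fixLt α)

/-- The double coset `L·p·M`. -/
def dcosOf (L M : Subgroup P3) (p : P3) : Set P3 :=
  {y | ∃ a ∈ L, ∃ b ∈ M, y = a * p * b}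

/-- underlying function of `θ_j[β]`. -/
def thetaFun (β j : ℕ) (x : ℕ) : ℕ :=
  if β ≤ x ∧ x < β + j then x + j
  else if β + j ≤ x ∧ x < β + 2 * j then x - j
  else x

lemma thetaFun_invol (β j : ℕ) : ∀ x, thetaFun β j (thetaFun β j x) = x := by
  intro x
  simp only [thetaFun]
  split_ifs <;> omega

/-- `θ_j[β]`: swaps the blocks `[β, β+j)` and `[β+j, β+2j)`. -/
def theta (β j : ℕ) : Equiv.Perm ℕ :=
  ⟨thetaFun β j, thetaFun β j, thetaFun_invol β j, thetaFun_invol β j⟩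

lemma theta_mem_Sinf (β j : ℕ) : theta β j ∈ Sinf := by
  apply Set.Finite.subset (Set.finite_Iio (β + 2 * j))
  intro x hx
  simp only [Set.mem_setOf_eq, theta, Equiv.coe_fn_mk, Set.mem_Iio] at hx ⊢
  by_contra hc
  push_neg at hc
  apply hx
  simp only [thetaFun]
  split_ifs <;> omega

/-- `Θ_j[β] = (θ_j[β], θ_j[β], θ_j[β])`. -/
def ThetaP (β j : ℕ) : P3 := diag3 (theta β j)

lemma KK_le_G {α : ℕ} : KK α ≤ Ggrp := by
  rintro g ⟨h, hh, rfl⟩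
  exact ⟨hh.1, hh.1, hh.1⟩

lemma Theta_mem_G (β j : ℕ) : ThetaP β j ∈ Ggrp :=
  ⟨theta_mem_Sinf β j, theta_mem_Sinf β j, theta_mem_Sinf β j⟩

/-! ### Auxiliary material for Statement 2 -/

lemma theta_mul_self (β j : ℕ) : theta β j * theta β j = 1 := by
  ext x
  simp only [Equiv.Perm.mul_apply, Equiv.Perm.one_apply, theta, Equiv.coe_fn_mk]
  exact thetaFun_invol β j x

/-- underlying function of the block-translation permutation. -/
def blockMoveFun (M t s y : ℕ) : ℕ :=
  if M ≤ y ∧ y < M + t then y + s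
  else if M + t ≤ y ∧ y < M + t + s then y - t
  else y

/-- inverse function of the block-translation permutation. -/
def blockMoveInv (M t s z : ℕ) : ℕ :=
  if M + s ≤ z ∧ z < M + s + t then z - s
  else if M ≤ z ∧ z < M + s then z + t
  else z

/-- The permutation translating the block `[M, M+t)` by `s`, shifting
`[M+t, M+t+s)` down by `t`, and fixing everything else. -/
def blockMove (M t s : ℕ) : Equiv.Perm ℕ :=
  ⟨blockMoveFun M t s, blockMoveInv M t s,
   fun y => by simp only [blockMoveFun, blockMoveInv]; split_ifs <;> omega,
   fun z => by simp only [blockMoveFun, blockMoveInv]; split_ifs <;> omega⟩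

lemma blockMove_mem_Sinf (M t s : ℕ) : blockMove M t s ∈ Sinf := by
  apply Set.Finite.subset (Set.finite_Iio (M + t + s))
  intro x hx
  simp only [Set.mem_setOf_eq, blockMove, Equiv.coe_fn_mk, Set.mem_Iio] at hx ⊢
  by_contra hc
  push_neg at hc
  apply hx
  simp only [blockMoveFun]
  split_ifs <;> omega

lemma blockMove_fix (M t s x : ℕ) (hx : x < M) : blockMove M t s x = x := by
  simp only [blockMove, Equiv.coe_fn_mk, blockMoveFun]
  split_ifs <;> omega

lemma fix_ge_of_fix_lt {f : Equiv.Perm ℕ} {M : ℕ} (hf : ∀ x, x < M → f x = x) :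
    ∀ x, M ≤ x → M ≤ f x := by
  intro x hx
  by_contra h
  push_neg at h
  have := f.injective (hf (f x) h)
  omega

lemma fix_lt_of_fix_ge {g : Equiv.Perm ℕ} {M : ℕ} (hg : ∀ x, M ≤ x → g x = x) :
    ∀ x, x < M → g x < M := by
  intro x hx
  by_contra h
  push_neg at h
  have := g.injective (hg (g x) h)
  omega

/-- A permutation supported on `[M,∞)` commutes with one supported on `[0,M)`. -/
lemma comm_of_disjoint_support {f g : Equiv.Perm ℕ} {M : ℕ}
    (hf : ∀ x, x < M → f x = x) (hg : ∀ x, M ≤ x → g x = x) :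
    f * g = g * f := by
  ext x
  simp only [Equiv.Perm.mul_apply]
  by_cases hx : M ≤ x
  · rw [hg x hx, hg (f x) (fix_ge_of_fix_lt hf x hx)]
  · push_neg at hx
    rw [hf x hx, hf (g x) (fix_lt_of_fix_ge hg x hx)]

lemma dcos_eq_of {L M : Subgroup P3} {x a b : P3} (ha : a ∈ L) (hb : b ∈ M) :
    dcosOf L M (a * x * b) = dcosOf L M x := by
  ext y
  constructor
  · rintro ⟨a', ha', b', hb', rfl⟩
    exact ⟨a' * a, mul_mem ha' ha, b * b', mul_mem hb hb', by group⟩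
  · rintro ⟨a', ha', b', hb', rfl⟩
    exact ⟨a' * a⁻¹, mul_mem ha' (inv_mem ha), b⁻¹ * b', mul_mem (inv_mem hb) hb', by group⟩

lemma bound_of_Sinf {f : Equiv.Perm ℕ} (hf : f ∈ Sinf) :
    ∃ m : ℕ, ∀ x, m ≤ x → f x = x := by
  have hf' : {x | f x ≠ x}.Finite := hf
  obtain ⟨m, hm⟩ := hf'.bddAbove
  refine ⟨m + 1, fun x hx => ?_⟩
  by_contra h
  have : x ≤ m := hm h
  omega

/-- For all `α, β, γ ∈ ℕ` and all `p, q ∈ G`, the sequence of double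
cosets `j ↦ K[α]·(p·Θ_j[β]·q)·K[γ]` is eventually constant. -/
theorem doubleCoset_sequence_eventually_constant
    (α β γ : ℕ) (p q : P3) (hp : p ∈ Ggrp) (hq : q ∈ Ggrp) :
    ∃ N : ℕ, ∀ j k : ℕ, N ≤ j → N ≤ k →
      dcosOf (KK α) (KK γ) (p * ThetaP β j * q) =
        dcosOf (KK α) (KK γ) (p * ThetaP β k * q) := by
  simp only [Ggrp, Subgroup.mem_prod] at hp hq
  obtain ⟨hp1, hp2, hp3⟩ := hp
  obtain ⟨hq1, hq2, hq3⟩ := hq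
  obtain ⟨m1, hm1⟩ := bound_of_Sinf hp1
  obtain ⟨m2, hm2⟩ := bound_of_Sinf hp2
  obtain ⟨m3, hm3⟩ := bound_of_Sinf hp3
  obtain ⟨m4, hm4⟩ := bound_of_Sinf hq1
  obtain ⟨m5, hm5⟩ := bound_of_Sinf hq2
  obtain ⟨m6, hm6⟩ := bound_of_Sinf hq3
  set M : ℕ := m1 + m2 + m3 + m4 + m5 + m6 + α + β + γ + 1 with hM
  set t : ℕ := M - β with ht
  have hβt : M = β + t := by omega
  have hMp1 : ∀ x, M ≤ x → p.1 x = x := fun x hx => hm1 x (by omega)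
  have hMp2 : ∀ x, M ≤ x → p.2.1 x = x := fun x hx => hm2 x (by omega)
  have hMp3 : ∀ x, M ≤ x → p.2.2 x = x := fun x hx => hm3 x (by omega)
  have hMq1 : ∀ x, M ≤ x → q.1 x = x := fun x hx => hm4 x (by omega)
  have hMq2 : ∀ x, M ≤ x → q.2.1 x = x := fun x hx => hm5 x (by omega)
  have hMq3 : ∀ x, M ≤ x → q.2.2 x = x := fun x hx => hm6 x (by omega)
  have key : ∀ j, t ≤ j →
      dcosOf (KK α) (KK γ) (p * ThetaP β j * q) =
        dcosOf (KK α) (KK γ) (p * ThetaP β t * q) := by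
    intro j hj
    set s : ℕ := j - t with hs
    set d : Equiv.Perm ℕ := blockMove M t s with hd
    set c : Equiv.Perm ℕ := theta β t * d⁻¹ * theta β j with hc
    have hdinv : ∀ z, (d⁻¹ : Equiv.Perm ℕ) z = blockMoveInv M t s z := fun z => rfl
    have hcfix : ∀ x, x < M → c x = x := by
      intro x hx
      simp only [hc, Equiv.Perm.mul_apply]
      rcases lt_or_ge x β with h1 | h1
      · have e1 : theta β j x = x := by
          simp only [theta, Equiv.coe_fn_mk, thetaFun]; split_ifs <;> omega
        rw [e1, hdinv]
        have e2 : blockMoveInv M t s x = x := by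
          simp only [blockMoveInv]; split_ifs <;> omega
        rw [e2]
        simp only [theta, Equiv.coe_fn_mk, thetaFun]; split_ifs <;> omega
      · have e1 : theta β j x = x + j := by
          simp only [theta, Equiv.coe_fn_mk, thetaFun]; split_ifs <;> omega
        rw [e1, hdinv]
        have e2 : blockMoveInv M t s (x + j) = x + t := by
          simp only [blockMoveInv]; split_ifs <;> omega
        rw [e2]
        simp only [theta, Equiv.coe_fn_mk, thetaFun]; split_ifs <;> omega
    have hdfix : ∀ x, x < M → d x = x := fun x hx => blockMove_fix M t s x hx
    have hcS : c ∈ Sinf :=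
      mul_mem (mul_mem (theta_mem_Sinf β t) (inv_mem (blockMove_mem_Sinf M t s)))
        (theta_mem_Sinf β j)
    have hdS : d ∈ Sinf := blockMove_mem_Sinf M t s
    have haK : diag3 c ∈ KK α :=
      Subgroup.mem_map.mpr ⟨c, Subgroup.mem_inf.mpr ⟨hcS, fun i hi => hcfix i (by omega)⟩, rfl⟩
    have hbK : diag3 d ∈ KK γ :=
      Subgroup.mem_map.mpr ⟨d, Subgroup.mem_inf.mpr ⟨hdS, fun i hi => hdfix i (by omega)⟩, rfl⟩
    have hθθ : theta β j * theta β j = 1 := theta_mul_self β j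
    have hcθd : c * theta β j * d = theta β t := by
      calc c * theta β j * d
          = theta β t * d⁻¹ * (theta β j * theta β j) * d := by rw [hc]; group
        _ = theta β t := by rw [hθθ]; group
    have comp : ∀ u v : Equiv.Perm ℕ, (∀ x, M ≤ x → u x = x) → (∀ x, M ≤ x → v x = x) →
        c * (u * theta β j * v) * d = u * theta β t * v := by
      intro u v hu hv
      have h1 : c * u = u * c := comm_of_disjoint_support hcfix hu
      have h2 : d * v = v * d := comm_of_disjoint_support hdfix hv
      calc c * (u * theta β j * v) * d
          = (c * u) * (theta β j * (v * d)) := by group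
        _ = (u * c) * (theta β j * (d * v)) := by rw [h1, ← h2]
        _ = u * (c * theta β j * d) * v := by group
        _ = u * theta β t * v := by rw [hcθd]
    have heq : diag3 c * (p * ThetaP β j * q) * diag3 d = p * ThetaP β t * q := by
      have e1 := comp p.1 q.1 hMp1 hMq1
      have e2 := comp p.2.1 q.2.1 hMp2 hMq2
      have e3 := comp p.2.2 q.2.2 hMp3 hMq3
      exact Prod.ext e1 (Prod.ext e2 e3)
    calc dcosOf (KK α) (KK γ) (p * ThetaP β j * q)
        = dcosOf (KK α) (KK γ) (diag3 c * (p * ThetaP β j * q) * diag3 d) :=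
          (dcos_eq_of haK hbK).symm
      _ = dcosOf (KK α) (KK γ) (p * ThetaP β t * q) := by rw [heq]
  exact ⟨t, fun j k hj hk => (key j hj).trans (key k hk).symm⟩
end

section
/- For all α, β, γ ∈ ℕ and all p, q ∈ G, the eventual value of the double coset K[α]·(p · Θ_j[β] · q)·K[γ] does not depend on the choice of representatives: if p' ∈ K[α]·p·K[β] and q' ∈ K[β]·q·K[γ], then there exists N such that for all j ≥ N, K[α]·(p' · Θ_j[β] · q')·K[γ] = K[α]·(p · Θ_j[β] · q)·K[γ]. -/
open Equiv

/-! ### Auxiliary lemmas for Statement 3 -/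

lemma dcosOf_eq_of_mem {L M : Subgroup P3} {x y : P3} (h : x ∈ dcosOf L M y) :
    dcosOf L M x = dcosOf L M y := by
  obtain ⟨a, ha, b, hb, rfl⟩ := h
  ext z
  constructor
  · rintro ⟨a', ha', b', hb', rfl⟩
    exact ⟨a' * a, mul_mem ha' ha, b * b', mul_mem hb hb', by group⟩
  · rintro ⟨a', ha', b', hb', rfl⟩
    exact ⟨a' * a⁻¹, mul_mem ha' (inv_mem ha), b⁻¹ * b', mul_mem (inv_mem hb) hb', by group⟩

lemma exists_bound_of_mem_Sinf {g : Equiv.Perm ℕ} (hg : g ∈ Sinf) :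
    ∃ B, ∀ x, B ≤ x → g x = x := by
  obtain ⟨B, hB⟩ := (hg : {x | g x ≠ x}.Finite).bddAbove
  exact ⟨B + 1, fun x hx => by by_contra h; exact absurd (hB h) (by omega)⟩

lemma theta_apply (β j x : ℕ) : theta β j x = thetaFun β j x := rfl

lemma thetaFun_of_lo {β j x : ℕ} (h1 : β ≤ x) (h2 : x < β + j) :
    thetaFun β j x = x + j := by
  simp only [thetaFun]; split_ifs <;> omega

lemma thetaFun_of_hi {β j x : ℕ} (h1 : β + j ≤ x) (h2 : x < β + 2 * j) :
    thetaFun β j x = x - j := by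
  simp only [thetaFun]; split_ifs <;> omega

lemma thetaFun_of_out {β j x : ℕ} (h : x < β ∨ β + 2 * j ≤ x) :
    thetaFun β j x = x := by
  simp only [thetaFun]; split_ifs <;> omega

/-- Conjugating a permutation supported in `[β, B)` by `θ_j[β]` (with `B ≤ β + j`)
yields a permutation fixing everything outside `[β + j, B + j)`. -/
lemma conj_theta_fix {β j B : ℕ} (b : Equiv.Perm ℕ)
    (hb1 : ∀ i < β, b i = i) (hb2 : ∀ x, B ≤ x → b x = x)
    (hβB : β ≤ B) (hBj : B ≤ β + j)
    {x : ℕ} (hx : x < β + j ∨ B + j ≤ x) :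
    (theta β j * b * theta β j) x = x := by
  have key : (theta β j) (b ((theta β j) x)) = x := by
    simp only [theta_apply]
    rcases hx with hx | hx
    · by_cases h1 : x < β
      · rw [thetaFun_of_out (Or.inl h1), hb1 x h1, thetaFun_of_out (Or.inl h1)]
      · push_neg at h1
        rw [thetaFun_of_lo h1 hx, hb2 (x + j) (by omega),
          thetaFun_of_hi (by omega) (by omega)]
        omega
    · by_cases h2 : x < β + 2 * j
      · rw [thetaFun_of_hi (by omega) h2, hb2 (x - j) (by omega),
          thetaFun_of_lo (by omega) (by omega)]
        omega
      · push_neg at h2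
        rw [thetaFun_of_out (Or.inr h2), hb2 x (by omega),
          thetaFun_of_out (Or.inr h2)]
  simpa only [Equiv.Perm.mul_apply] using key

lemma perm_comm_of_disj {g h : Equiv.Perm ℕ} (H : ∀ x, g x = x ∨ h x = x) :
    g * h = h * g :=
  (Equiv.Perm.Disjoint.commute H).eq

lemma mul_diag3_comm {r : P3} {h : Equiv.Perm ℕ}
    (h1 : r.1 * h = h * r.1) (h2 : r.2.1 * h = h * r.2.1)
    (h3 : r.2.2 * h = h * r.2.2) :
    r * diag3 h = diag3 h * r := by
  have hd : diag3 h = (h, h, h) := rfl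
  rw [hd]
  exact Prod.ext h1 (Prod.ext h2 h3)

/-- The key group-theoretic rearrangement. -/
lemma group_rearrange {H : Type*} [Group H] (A P B T C Q D C' B' : H)
    (h1 : T * C = C' * T) (h2 : B * T = T * B')
    (h3 : P * C' = C' * P) (h4 : B * C' = C' * B) (h5 : Q * B' = B' * Q) :
    (A * P * B) * T * (C * Q * D) = (A * C') * (P * T * Q) * (B' * D) := by
  calc (A * P * B) * T * (C * Q * D)
      = A * (P * (B * (T * C) * Q)) * D := by group
    _ = A * (P * (B * (C' * T) * Q)) * D := by rw [h1]
    _ = A * (P * ((B * C') * (T * Q))) * D := by group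
    _ = A * (P * ((C' * B) * (T * Q))) * D := by rw [h4]
    _ = A * ((P * C') * ((B * T) * Q)) * D := by group
    _ = A * ((C' * P) * ((B * T) * Q)) * D := by rw [h3]
    _ = A * ((C' * P) * ((T * B') * Q)) * D := by rw [h2]
    _ = A * ((C' * P) * (T * (B' * Q))) * D := by group
    _ = A * ((C' * P) * (T * (Q * B'))) * D := by rw [← h5]
    _ = (A * C') * (P * T * Q) * (B' * D) := by group

/-- The eventual value of the double coset `K[α]·(p·Θ_j[β]·q)·K[γ]`
does not depend on the choice of representatives `p` of `K[α]·p·K[β]` and `q` of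
`K[β]·q·K[γ]`. -/
theorem doubleCoset_limit_independent_of_representatives
    (α β γ : ℕ) (p q p' q' : P3) (hp : p ∈ Ggrp) (hq : q ∈ Ggrp)
    (hp' : p' ∈ dcosOf (KK α) (KK β) p) (hq' : q' ∈ dcosOf (KK β) (KK γ) q) :
    ∃ N : ℕ, ∀ j : ℕ, N ≤ j →
      dcosOf (KK α) (KK γ) (p' * ThetaP β j * q') =
        dcosOf (KK α) (KK γ) (p * ThetaP β j * q) := by
  obtain ⟨A, hA, Bp, hBp, hp'eq⟩ := hp'
  obtain ⟨C, hC, Dp, hDp, hq'eq⟩ := hq'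
  obtain ⟨a, ha, rfl⟩ := hA
  obtain ⟨b, hb, rfl⟩ := hBp
  obtain ⟨c, hc, rfl⟩ := hC
  obtain ⟨d, hd, rfl⟩ := hDp
  -- support bounds
  obtain ⟨Bb, hBb⟩ := exists_bound_of_mem_Sinf hb.1
  obtain ⟨Bc, hBc⟩ := exists_bound_of_mem_Sinf hc.1
  obtain ⟨B1, hB1⟩ := exists_bound_of_mem_Sinf hp.1
  obtain ⟨B2, hB2⟩ := exists_bound_of_mem_Sinf hp.2.1
  obtain ⟨B3, hB3⟩ := exists_bound_of_mem_Sinf hp.2.2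
  obtain ⟨B4, hB4⟩ := exists_bound_of_mem_Sinf hq.1
  obtain ⟨B5, hB5⟩ := exists_bound_of_mem_Sinf hq.2.1
  obtain ⟨B6, hB6⟩ := exists_bound_of_mem_Sinf hq.2.2
  set B : ℕ := α + β + γ + Bb + Bc + B1 + B2 + B3 + B4 + B5 + B6 + 1 with hBdef
  refine ⟨B, fun j hj => ?_⟩
  set t : Equiv.Perm ℕ := theta β j with htdef
  have ht2 : t * t = 1 := theta_mul_self β j
  set c' : Equiv.Perm ℕ := t * c * t with hc'def
  set b' : Equiv.Perm ℕ := t * b * t with hb'def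
  have hBj : B ≤ β + j := by omega
  have hc'fix : ∀ x : ℕ, x < β + j ∨ B + j ≤ x → c' x = x := fun x hx =>
    conj_theta_fix c (fun i hi => hc.2 i hi) (fun x hx => hBc x (by omega))
      (by omega) hBj hx
  have hb'fix : ∀ x : ℕ, x < β + j ∨ B + j ≤ x → b' x = x := fun x hx =>
    conj_theta_fix b (fun i hi => hb.2 i hi) (fun x hx => hBb x (by omega))
      (by omega) hBj hx
  have hc'S : c' ∈ Sinf := by
    apply Set.Finite.subset (Set.finite_Iio (B + j))
    intro x hx
    simp only [Set.mem_setOf_eq, Set.mem_Iio] at hx ⊢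
    by_contra h
    exact hx (hc'fix x (Or.inr (by omega)))
  have hb'S : b' ∈ Sinf := by
    apply Set.Finite.subset (Set.finite_Iio (B + j))
    intro x hx
    simp only [Set.mem_setOf_eq, Set.mem_Iio] at hx ⊢
    by_contra h
    exact hx (hb'fix x (Or.inr (by omega)))
  have hc'K : diag3 c' ∈ KK α :=
    ⟨c', ⟨hc'S, fun i hi => hc'fix i (Or.inl (by omega))⟩, rfl⟩
  have hb'K : diag3 b' ∈ KK γ :=
    ⟨b', ⟨hb'S, fun i hi => hb'fix i (Or.inl (by omega))⟩, rfl⟩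
  -- permutation-level identities
  have e1 : t * c = c' * t := by
    rw [hc'def, mul_assoc (t * c) t t, ht2, mul_one]
  have e2 : b * t = t * b' := by
    rw [hb'def, ← mul_assoc t (t * b) t, ← mul_assoc t t b, ht2, one_mul]
  have comm_of_bound : ∀ (g : Equiv.Perm ℕ) (Bg : ℕ), Bg ≤ B →
      (∀ x, Bg ≤ x → g x = x) → ∀ h' : Equiv.Perm ℕ,
      (∀ x, x < β + j ∨ B + j ≤ x → h' x = x) → g * h' = h' * g := by
    intro g Bg hBgB hg h' hh'
    apply perm_comm_of_disj
    intro x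
    by_cases hxb : x < β + j
    · exact Or.inr (hh' x (Or.inl hxb))
    · exact Or.inl (hg x (by omega))
  have e4 : b * c' = c' * b := comm_of_bound b Bb (by omega) hBb c' hc'fix
  -- P3-level identities
  have E1 : ThetaP β j * diag3 c = diag3 c' * ThetaP β j := by
    show diag3 t * diag3 c = diag3 c' * diag3 t
    rw [← map_mul, ← map_mul, e1]
  have E2 : diag3 b * ThetaP β j = ThetaP β j * diag3 b' := by
    show diag3 b * diag3 t = diag3 t * diag3 b'
    rw [← map_mul, ← map_mul, e2]
  have E3 : p * diag3 c' = diag3 c' * p :=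
    mul_diag3_comm (comm_of_bound p.1 B1 (by omega) hB1 c' hc'fix)
      (comm_of_bound p.2.1 B2 (by omega) hB2 c' hc'fix)
      (comm_of_bound p.2.2 B3 (by omega) hB3 c' hc'fix)
  have E4 : diag3 b * diag3 c' = diag3 c' * diag3 b := by
    rw [← map_mul, ← map_mul, e4]
  have E5 : q * diag3 b' = diag3 b' * q :=
    mul_diag3_comm (comm_of_bound q.1 B4 (by omega) hB4 b' hb'fix)
      (comm_of_bound q.2.1 B5 (by omega) hB5 b' hb'fix)
      (comm_of_bound q.2.2 B6 (by omega) hB6 b' hb'fix)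
  have key : p' * ThetaP β j * q' =
      (diag3 a * diag3 c') * (p * ThetaP β j * q) * (diag3 b' * diag3 d) := by
    rw [hp'eq, hq'eq]
    exact group_rearrange (diag3 a) p (diag3 b) (ThetaP β j) (diag3 c) q (diag3 d)
      (diag3 c') (diag3 b') E1 E2 E3 E4 E5
  apply dcosOf_eq_of_mem
  exact ⟨diag3 a * diag3 c', mul_mem ⟨a, ha, rfl⟩ hc'K,
    diag3 b' * diag3 d, mul_mem hb'K ⟨d, hd, rfl⟩, key⟩
end

section
/- Concentration of convolutions: fix α ∈ ℕ and let p, q ∈ G be such that every coordinate of p and of q fixes all points x ≥ m. In the group algebra ℂ[G] (finitely supported functions on G with convolution), for n ∈ ℕ set δ_{p,n} := |K_n[α]·p·K_n[α]|⁻¹ · Σ_{g ∈ K_n[α]·p·K_n[α]} e_g, where e_g is the delta function at g, and similarly δ_{q,n}. Then there exists j₀ ≥ m such that for every j ≥ j₀, the quantity σ_n := Σ_{g ∈ K_n[α]·(p·Θ_j[α]·q)·K_n[α]} (δ_{p,n} * δ_{q,n})(g) tends to 1 as n → ∞. (That is, the convolution δ_{p,n} * δ_{q,n} concentrates, as n →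 ∞, on the double coset representing the ⊛-product of the double cosets of p and q.) -/
open Equiv

/-- Permutations fixing every point `≥ n`. -/
def fixGe (n : ℕ) : Subgroup (Equiv.Perm ℕ) where
  carrier := {g | ∀ x, n ≤ x → g x = x}
  one_mem' := fun _ _ => rfl
  mul_mem' {f g} hf hg := fun x hx => by
    simp only [Equiv.Perm.mul_apply, hg x hx, hf x hx]
  inv_mem' {g} hg := fun x hx => by
    apply g.injective
    rw [← Equiv.Perm.mul_apply, mul_inv_cancel, Equiv.Perm.one_apply, hg x hx]

/-- `K_n[α]`: diagonal triples `(h,h,h)` where `h` fixes `0,…,α-1` and all points `≥ n`. -/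
def Kn (α n : ℕ) : Subgroup P3 := Subgroup.map diag3 (fixLt α ⊓ fixGe n)

/-- The normalized delta function of a set: `|D|⁻¹` on `D` and `0` elsewhere. -/
noncomputable def deltaFn (D : Set P3) : P3 → ℂ :=
  D.indicator fun _ => (Nat.card D : ℂ)⁻¹

/-- Convolution of functions on the group `Perm(ℕ)³`. -/
noncomputable def conv (f g : P3 → ℂ) : P3 → ℂ :=
  fun h => ∑ᶠ u : P3, f u * g (u⁻¹ * h)


section Aux
open Finset

lemma perm_apply_inv_self' (f : Perm ℕ) (x : ℕ) : f (f⁻¹ x) = x := by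
  rw [← Equiv.Perm.mul_apply, mul_inv_cancel, Equiv.Perm.one_apply]

lemma perm_inv_apply_self' (f : Perm ℕ) (x : ℕ) : f⁻¹ (f x) = x := by
  rw [← Equiv.Perm.mul_apply, inv_mul_cancel, Equiv.Perm.one_apply]

lemma fixGe_lt {n : ℕ} {g : Perm ℕ} (hg : g ∈ fixGe n) {x : ℕ} (hx : x < n) : g x < n := by
  by_contra h
  push_neg at h
  have h1 : g (g x) = g x := hg (g x) h
  have := g.injective h1
  omega

lemma fixLt_ge {α : ℕ} {g : Perm ℕ} (hg : g ∈ fixLt α) {x : ℕ} (hx : α ≤ x) : α ≤ g x := by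
  by_contra h
  push_neg at h
  have h1 : g (g x) = g x := hg (g x) h
  have := g.injective h1
  omega

lemma KB_finite (α n : ℕ) : ((fixLt α ⊓ fixGe n : Subgroup (Perm ℕ)) : Set (Perm ℕ)).Finite := by
  have : Finite ((fixLt α ⊓ fixGe n : Subgroup (Perm ℕ)) : Set (Perm ℕ)) := by
    apply Finite.of_injective (β := Fin n → Fin n)
      (fun g => fun i => ⟨g.1 i, fixGe_lt (Subgroup.mem_inf.mp g.2).2 i.2⟩)
    intro g g' h
    apply Subtype.ext
    apply Equiv.ext
    intro x
    by_cases hx : x < n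
    · simpa using congrFun h ⟨x, hx⟩
    · push_neg at hx
      rw [(Subgroup.mem_inf.mp g.2).2 x hx, (Subgroup.mem_inf.mp g'.2).2 x hx]
  exact Set.toFinite _

lemma Kn_finite (α n : ℕ) : ((Kn α n : Set P3)).Finite := by
  rw [Kn, Subgroup.coe_map]
  exact (KB_finite α n).image _

lemma dcos_eq_image (L M : Subgroup P3) (z : P3) :
    dcosOf L M z = (fun ab : P3 × P3 => ab.1 * z * ab.2) '' ((L : Set P3) ×ˢ (M : Set P3)) := by
  ext x
  constructor
  · rintro ⟨a, ha, b, hb, rfl⟩; exact ⟨(a, b), ⟨ha, hb⟩, rfl⟩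
  · rintro ⟨⟨a, b⟩, ⟨ha, hb⟩, rfl⟩; exact ⟨a, ha, b, hb, rfl⟩

lemma dcos_finite (α n : ℕ) (z : P3) : (dcosOf (Kn α n) (Kn α n) z).Finite := by
  rw [dcos_eq_image]
  exact ((Kn_finite α n).prod (Kn_finite α n)).image _

lemma self_mem_dcos (L M : Subgroup P3) (z : P3) : z ∈ dcosOf L M z :=
  ⟨1, one_mem L, 1, one_mem M, by group⟩

lemma dcos_inv {L M : Subgroup P3} {z a b : P3} (ha : a ∈ L) (hb : b ∈ M) (x : P3) :
    a * x * b ∈ dcosOf L M z ↔ x ∈ dcosOf L M z := by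
  constructor
  · rintro ⟨a', ha', b', hb', he⟩
    refine ⟨a⁻¹ * a', mul_mem (inv_mem ha) ha', b' * b⁻¹, mul_mem hb' (inv_mem hb), ?_⟩
    have hx : x = a⁻¹ * (a * x * b) * b⁻¹ := by group
    rw [he] at hx
    rw [hx]; group
  · rintro ⟨a', ha', b', hb', rfl⟩
    exact ⟨a * a', mul_mem ha ha', b' * b, mul_mem hb' hb, by group⟩

lemma theta_apply_low {β j x : ℕ} (h1 : β ≤ x) (h2 : x < β + j) : theta β j x = x + j := by
  simp only [theta, Equiv.coe_fn_mk, thetaFun]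
  split_ifs <;> omega

lemma theta_fix {β j x : ℕ} (h : x < β ∨ β + 2 * j ≤ x) : theta β j x = x := by
  simp only [theta, Equiv.coe_fn_mk, thetaFun]
  split_ifs <;> omega

lemma theta_inv (β j : ℕ) : (theta β j)⁻¹ = theta β j :=
  inv_eq_of_mul_eq_one_right (Equiv.ext (thetaFun_invol β j))

lemma commute_of_fix {f g : Perm ℕ} {m : ℕ} (hf : ∀ x, m ≤ x → f x = x)
    (hg : ∀ x, g x ≠ x → m ≤ x) : Commute f g := by
  apply Equiv.Perm.Disjoint.commute
  intro x
  by_cases h : m ≤ x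
  · exact Or.inl (hf x h)
  · right
    by_contra h2
    exact h (hg x h2)

/-- extension of an injection on a finite set to a permutation supported in `B` -/
lemma ext_perm (B : Finset ℕ) (S : Finset ℕ) :
    ∀ (f : ℕ → ℕ), S ⊆ B → (∀ x ∈ S, ∀ y ∈ S, f x = f y → x = y) →
    (∀ x ∈ S, f x ∈ B) →
    ∃ d : Equiv.Perm ℕ, (∀ x ∈ S, d x = f x) ∧ (∀ x : ℕ, d x ≠ x → x ∈ B ∧ d x ∈ B) := by
  induction S using Finset.induction with
  | empty => exact fun f _ _ _ => ⟨1, by simp, by simp⟩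
  | @insert a S ha IH =>
    intro f hSB hinj hfB
    obtain ⟨d, hd1, hd2⟩ := IH f (fun x hx => hSB (Finset.mem_insert_of_mem hx))
      (fun x hx y hy => hinj x (Finset.mem_insert_of_mem hx) y (Finset.mem_insert_of_mem hy))
      (fun x hx => hfB x (Finset.mem_insert_of_mem hx))
    set t := d⁻¹ (f a) with htdef
    have hdt : d t = f a := by rw [htdef]; exact perm_apply_inv_self' d _
    have haB : a ∈ B := hSB (Finset.mem_insert_self a S)
    have hfaB : f a ∈ B := hfB a (Finset.mem_insert_self a S)
    have htB : t ∈ B := by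
      by_cases h : d t = t
      · have ht : t = f a := by rw [← hdt, h]
        rw [ht]; exact hfaB
      · exact (hd2 t h).1
    refine ⟨d * Equiv.swap a t, ?_, ?_⟩
    · intro x hx
      rcases Finset.mem_insert.mp hx with rfl | hxS
      · rw [Equiv.Perm.mul_apply, Equiv.swap_apply_left]; exact hdt
      · have hxa : x ≠ a := fun h => ha (h ▸ hxS)
        have hxt : x ≠ t := by
          intro h
          have : d x = f a := by rw [h]; exact hdt
          rw [hd1 x hxS] at this
          exact hxa (hinj x (Finset.mem_insert_of_mem hxS) a (Finset.mem_insert_self a S) this)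
        rw [Equiv.Perm.mul_apply, Equiv.swap_apply_of_ne_of_ne hxa hxt, hd1 x hxS]
    · intro x hx
      by_cases hxa : x = a
      · subst hxa
        refine ⟨haB, ?_⟩
        rw [Equiv.Perm.mul_apply, Equiv.swap_apply_left, hdt]
        exact hfaB
      · by_cases hxt : x = t
        · subst hxt
          refine ⟨htB, ?_⟩
          rw [Equiv.Perm.mul_apply, Equiv.swap_apply_right]
          by_cases hda : d a = a
          · rw [hda]; exact haB
          · exact (hd2 a hda).2
        · rw [Equiv.Perm.mul_apply, Equiv.swap_apply_of_ne_of_ne hxa hxt] at hx ⊢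
          exact hd2 x hx

end Aux

section Count
open Finset
open scoped Classical

noncomputable def KFn (α n : ℕ) : Finset P3 := (Kn_finite α n).toFinset
noncomputable def DFn (α n : ℕ) (z : P3) : Finset P3 := (dcos_finite α n z).toFinset

lemma mem_KFn {α n : ℕ} {x : P3} : x ∈ KFn α n ↔ x ∈ Kn α n := (Kn_finite α n).mem_toFinset

lemma mem_DFn {α n : ℕ} {z x : P3} : x ∈ DFn α n z ↔ x ∈ dcosOf (Kn α n) (Kn α n) z :=
  (dcos_finite α n z).mem_toFinset

noncomputable def FFn (α n : ℕ) (p : P3) : Finset P3 :=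
  (KFn α n).filter (fun s => p⁻¹ * s * p ∈ Kn α n)

lemma card_fiber (α n : ℕ) (p : P3) {a b : P3} (ha : a ∈ Kn α n) (hb : b ∈ Kn α n) :
    ((((KFn α n) ×ˢ (KFn α n)).filter (fun k : P3 × P3 => k.1 * p * k.2 = a * p * b))).card
      = (FFn α n p).card := by
  apply Finset.card_bij' (i := fun k _ => a⁻¹ * k.1)
    (j := fun s _ => ((a * s, p⁻¹ * s⁻¹ * p * b) : P3 × P3))
  · -- hi
    intro k hk
    obtain ⟨hmem, heq⟩ := Finset.mem_filter.mp hk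
    obtain ⟨h1, h2⟩ := Finset.mem_product.mp hmem
    have h1' : k.1 ∈ Kn α n := mem_KFn.mp h1
    have h2' : k.2 ∈ Kn α n := mem_KFn.mp h2
    have e1 : k.1 = a * p * b * k.2⁻¹ * p⁻¹ := by rw [← heq]; group
    have key : p⁻¹ * (a⁻¹ * k.1) * p = b * k.2⁻¹ := by rw [e1]; group
    refine Finset.mem_filter.mpr ⟨mem_KFn.mpr (mul_mem (inv_mem ha) h1'), ?_⟩
    rw [key]
    exact mul_mem hb (inv_mem h2')
  · -- hj
    intro s hs
    obtain ⟨hsK, hsF⟩ := Finset.mem_filter.mp hs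
    have hsK' : s ∈ Kn α n := mem_KFn.mp hsK
    refine Finset.mem_filter.mpr ⟨Finset.mem_product.mpr ⟨?_, ?_⟩, ?_⟩
    · exact mem_KFn.mpr (mul_mem ha hsK')
    · have e : p⁻¹ * s⁻¹ * p * b = (p⁻¹ * s * p)⁻¹ * b := by group
      rw [mem_KFn, e]
      exact mul_mem (inv_mem hsF) hb
    · show (a * s) * p * (p⁻¹ * s⁻¹ * p * b) = a * p * b
      group
  · -- left inverse
    intro k hk
    obtain ⟨hmem, heq⟩ := Finset.mem_filter.mp hk
    have e2 : k.2 = p⁻¹ * k.1⁻¹ * (a * p * b) := by rw [← heq]; group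
    rw [Prod.ext_iff]
    constructor
    · show a * (a⁻¹ * k.1) = k.1
      group
    · show p⁻¹ * (a⁻¹ * k.1)⁻¹ * p * b = k.2
      rw [e2]; group
  · -- right inverse
    intro s _
    show a⁻¹ * (a * s) = s
    group

lemma card_dcos (α n : ℕ) (p : P3) :
    (DFn α n p).card * (FFn α n p).card = (KFn α n).card ^ 2 := by
  have h := Finset.card_eq_sum_card_fiberwise (s := (KFn α n) ×ˢ (KFn α n)) (t := DFn α n p)
    (f := fun k => k.1 * p * k.2)
    (by
      intro k hk
      rw [Finset.mem_coe, Finset.mem_product] at hk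
      exact mem_DFn.mpr ⟨k.1, mem_KFn.mp hk.1, k.2, mem_KFn.mp hk.2, rfl⟩)
  rw [Finset.card_product] at h
  have h2 : ∀ u ∈ DFn α n p,
      (((KFn α n) ×ˢ (KFn α n)).filter (fun k : P3 × P3 => k.1 * p * k.2 = u)).card
        = (FFn α n p).card := by
    intro u hu
    obtain ⟨a, ha, b, hb, rfl⟩ := mem_DFn.mp hu
    exact card_fiber α n p ha hb
  rw [Finset.sum_congr rfl h2, Finset.sum_const, smul_eq_mul] at h
  rw [sq, ← h]

lemma card_pairs (α n : ℕ) (p q z : P3) :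
    (((DFn α n p) ×ˢ (DFn α n q)).filter
        (fun uv : P3 × P3 => uv.1 * uv.2 ∈ dcosOf (Kn α n) (Kn α n) z)).card
      * ((FFn α n p).card * (FFn α n q).card)
    = (KFn α n).card ^ 3
      * ((KFn α n).filter (fun w => p * w * q ∈ dcosOf (Kn α n) (Kn α n) z)).card := by
  set D := dcosOf (Kn α n) (Kn α n) z with hD
  set GW := (KFn α n).filter (fun w => p * w * q ∈ D) with hGW
  set Pg := ((DFn α n p) ×ˢ (DFn α n q)).filter (fun uv : P3 × P3 => uv.1 * uv.2 ∈ D) with hPg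
  set TT := (((KFn α n) ×ˢ (KFn α n)) ×ˢ ((KFn α n) ×ˢ (KFn α n))).filter
    (fun k : (P3 × P3) × (P3 × P3) => p * (k.1.2 * k.2.1) * q ∈ D) with hTT
  -- Step A : TT.card = KF^3 * GW.card
  have hA : TT.card = (KFn α n).card ^ 3 * GW.card := by
    have : ((KFn α n) ×ˢ (GW ×ˢ ((KFn α n) ×ˢ (KFn α n)))).card = TT.card := by
      apply Finset.card_bij'
        (i := fun x _ => (((x.1, x.2.2.1), (x.2.2.1⁻¹ * x.2.1, x.2.2.2)) : (P3 × P3) × (P3 × P3)))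
        (j := fun k _ => ((k.1.1, (k.1.2 * k.2.1, (k.1.2, k.2.2))) : P3 × (P3 × (P3 × P3))))
      · intro x hx
        simp only [Finset.mem_product] at hx
        obtain ⟨h1, hw, h2, h4⟩ := hx
        rw [hGW, Finset.mem_filter] at hw
        refine Finset.mem_filter.mpr ⟨?_, ?_⟩
        · simp only [Finset.mem_product]
          exact ⟨⟨h1, h2⟩, ⟨mem_KFn.mpr (mul_mem (inv_mem (mem_KFn.mp h2)) (mem_KFn.mp hw.1)), h4⟩⟩
        · have e : x.2.2.1 * (x.2.2.1⁻¹ * x.2.1) = x.2.1 := by group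
          show p * (x.2.2.1 * (x.2.2.1⁻¹ * x.2.1)) * q ∈ D
          rw [e]
          exact hw.2
      · intro k hk
        obtain ⟨hmem, hcond⟩ := Finset.mem_filter.mp hk
        simp only [Finset.mem_product] at hmem
        simp only [Finset.mem_product]
        refine ⟨hmem.1.1, ?_, hmem.1.2, hmem.2.2⟩
        rw [hGW, Finset.mem_filter]
        exact ⟨mem_KFn.mpr (mul_mem (mem_KFn.mp hmem.1.2) (mem_KFn.mp hmem.2.1)), hcond⟩
      · intro x _
        simp [inv_mul_cancel_left, mul_inv_cancel_left]
      · intro k _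
        simp [inv_mul_cancel_left, mul_inv_cancel_left]
    rw [← this, Finset.card_product, Finset.card_product, Finset.card_product]
    ring
  -- Step B : TT.card = Pg.card * (Fp * Fq)
  have hB : TT.card = Pg.card * ((FFn α n p).card * (FFn α n q).card) := by
    have hmap : ∀ k ∈ TT, ((k.1.1 * p * k.1.2, k.2.1 * q * k.2.2) : P3 × P3) ∈ Pg := by
      intro k hk
      obtain ⟨hmem, hcond⟩ := Finset.mem_filter.mp hk
      simp only [Finset.mem_product] at hmem
      refine Finset.mem_filter.mpr ⟨?_, ?_⟩
      · rw [Finset.mem_product]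
        constructor
        · exact mem_DFn.mpr ⟨k.1.1, mem_KFn.mp hmem.1.1, k.1.2, mem_KFn.mp hmem.1.2, rfl⟩
        · exact mem_DFn.mpr ⟨k.2.1, mem_KFn.mp hmem.2.1, k.2.2, mem_KFn.mp hmem.2.2, rfl⟩
      · have e : (k.1.1 * p * k.1.2) * (k.2.1 * q * k.2.2)
            = k.1.1 * (p * (k.1.2 * k.2.1) * q) * k.2.2 := by group
        show (k.1.1 * p * k.1.2) * (k.2.1 * q * k.2.2) ∈ D
        rw [e, hD, dcos_inv (mem_KFn.mp hmem.1.1) (mem_KFn.mp hmem.2.2)]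
        exact hcond
    have h := Finset.card_eq_sum_card_fiberwise hmap
    have h2 : ∀ uv ∈ Pg,
        (TT.filter (fun k : (P3 × P3) × (P3 × P3) =>
            ((k.1.1 * p * k.1.2, k.2.1 * q * k.2.2) : P3 × P3) = uv)).card
          = (FFn α n p).card * (FFn α n q).card := by
      rintro ⟨u, v⟩ huv
      obtain ⟨hmemuv, hcnduv⟩ := Finset.mem_filter.mp huv
      rw [Finset.mem_product] at hmemuv
      have hcnduv' : u * v ∈ D := hcnduv
      have hsplit : TT.filter (fun k : (P3 × P3) × (P3 × P3) =>
            ((k.1.1 * p * k.1.2, k.2.1 * q * k.2.2) : P3 × P3) = (u, v))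
          = (((KFn α n) ×ˢ (KFn α n)).filter (fun k : P3 × P3 => k.1 * p * k.2 = u)) ×ˢ
            (((KFn α n) ×ˢ (KFn α n)).filter (fun k : P3 × P3 => k.1 * q * k.2 = v)) := by
        ext k
        simp only [Finset.mem_filter, Finset.mem_product, hTT, Prod.mk.injEq]
        constructor
        · rintro ⟨⟨⟨⟨ha1, ha2⟩, ha3, ha4⟩, _⟩, he1, he2⟩
          exact ⟨⟨⟨ha1, ha2⟩, he1⟩, ⟨⟨ha3, ha4⟩, he2⟩⟩
        · rintro ⟨⟨⟨ha1, ha2⟩, he1⟩, ⟨⟨ha3, ha4⟩, he2⟩⟩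
          refine ⟨⟨⟨⟨ha1, ha2⟩, ha3, ha4⟩, ?_⟩, he1, he2⟩
          have e : u * v = k.1.1 * (p * (k.1.2 * k.2.1) * q) * k.2.2 := by
            rw [← he1, ← he2]; group
          have h3 := hcnduv'
          rw [e, dcos_inv (mem_KFn.mp ha1) (mem_KFn.mp ha4)] at h3
          exact h3
      rw [hsplit, Finset.card_product]
      obtain ⟨a, ha, b, hb, e1⟩ := mem_DFn.mp hmemuv.1
      obtain ⟨a', ha', b', hb', e2⟩ := mem_DFn.mp hmemuv.2
      have e1' : u = a * p * b := e1
      have e2' : v = a' * q * b' := e2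
      rw [e1', e2', card_fiber α n p ha hb, card_fiber α n q ha' hb']
    rw [Finset.sum_congr rfl h2, Finset.sum_const, smul_eq_mul] at h
    exact h
  rw [← hB, hA]

end Count

section Sigma
open Finset
open scoped Classical

lemma deltaFn_apply_mem {α n : ℕ} {z u : P3} (hu : u ∈ dcosOf (Kn α n) (Kn α n) z) :
    deltaFn (dcosOf (Kn α n) (Kn α n) z) u = ((DFn α n z).card : ℂ)⁻¹ := by
  rw [deltaFn, Set.indicator_of_mem hu,
    Nat.card_eq_card_finite_toFinset (dcos_finite α n z)]
  rfl

lemma deltaFn_apply_not_mem {D : Set P3} {u : P3} (hu : u ∉ D) : deltaFn D u = 0 :=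
  Set.indicator_of_notMem hu _

lemma sigma_eq (α n : ℕ) (p q z : P3) :
    (∑ᶠ g ∈ dcosOf (Kn α n) (Kn α n) z,
        conv (deltaFn (dcosOf (Kn α n) (Kn α n) p)) (deltaFn (dcosOf (Kn α n) (Kn α n) q)) g)
      = ((((DFn α n p) ×ˢ (DFn α n q)).filter
            (fun uv : P3 × P3 => uv.1 * uv.2 ∈ dcosOf (Kn α n) (Kn α n) z)).card : ℂ)
          * (((DFn α n p).card : ℂ)⁻¹ * ((DFn α n q).card : ℂ)⁻¹) := by
  classical
  set Dp := dcosOf (Kn α n) (Kn α n) p with hDp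
  set Dq := dcosOf (Kn α n) (Kn α n) q with hDq
  set D := dcosOf (Kn α n) (Kn α n) z with hDz
  set cp := ((DFn α n p).card : ℂ)⁻¹ with hcp
  set cq := ((DFn α n q).card : ℂ)⁻¹ with hcq
  have hDcoe : D = ↑(DFn α n z) := ((dcos_finite α n z).coe_toFinset).symm
  rw [hDcoe, finsum_mem_coe_finset]
  have hconv : ∀ g0 ∈ DFn α n z, conv (deltaFn Dp) (deltaFn Dq) g0
      = ∑ u ∈ DFn α n p, deltaFn Dp u * deltaFn Dq (u⁻¹ * g0) := by
    intro g0 _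
    simp only [conv]
    apply finsum_eq_sum_of_support_subset
    intro u hu
    rw [Function.mem_support] at hu
    rw [Finset.mem_coe, mem_DFn]
    by_contra h
    exact hu (by rw [deltaFn_apply_not_mem h, zero_mul])
  rw [Finset.sum_congr rfl hconv]
  have hterm : ∀ g0 ∈ DFn α n z, ∀ u ∈ DFn α n p,
      deltaFn Dp u * deltaFn Dq (u⁻¹ * g0)
        = if u⁻¹ * g0 ∈ Dq then cp * cq else 0 := by
    intro g0 _ u hu
    rw [deltaFn_apply_mem (mem_DFn.mp hu)]
    by_cases h : u⁻¹ * g0 ∈ Dq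
    · rw [if_pos h, deltaFn_apply_mem h]
    · rw [if_neg h, deltaFn_apply_not_mem h, mul_zero]
  rw [Finset.sum_congr rfl (fun g0 hg0 => Finset.sum_congr rfl (hterm g0 hg0))]
  rw [← Finset.sum_product']
  rw [← Finset.sum_filter, Finset.sum_const, nsmul_eq_mul]
  congr 1
  norm_cast
  apply Finset.card_bij' (i := fun x _ => ((x.2, x.2⁻¹ * x.1) : P3 × P3))
    (j := fun y _ => ((y.1 * y.2, y.1) : P3 × P3))
  · intro x hx
    obtain ⟨hmem, hcond⟩ := Finset.mem_filter.mp hx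
    rw [Finset.mem_product] at hmem
    refine Finset.mem_filter.mpr ⟨Finset.mem_product.mpr ⟨hmem.2, mem_DFn.mpr hcond⟩, ?_⟩
    show x.2 * (x.2⁻¹ * x.1) ∈ DFn α n z
    have e : x.2 * (x.2⁻¹ * x.1) = x.1 := by group
    rw [e]
    exact hmem.1
  · intro y hy
    obtain ⟨hmem, hcond⟩ := Finset.mem_filter.mp hy
    rw [Finset.mem_product] at hmem
    refine Finset.mem_filter.mpr ⟨Finset.mem_product.mpr ⟨hcond, hmem.1⟩, ?_⟩
    show y.1⁻¹ * (y.1 * y.2) ∈ Dq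
    have e : y.1⁻¹ * (y.1 * y.2) = y.2 := by group
    rw [e]
    exact mem_DFn.mp hmem.2
  · intro x _
    simp [mul_inv_cancel_left, inv_mul_cancel_left]
  · intro y _
    simp [mul_inv_cancel_left, inv_mul_cancel_left]

lemma sigma_val (α n : ℕ) (p q z : P3) :
    (∑ᶠ g ∈ dcosOf (Kn α n) (Kn α n) z,
        conv (deltaFn (dcosOf (Kn α n) (Kn α n) p)) (deltaFn (dcosOf (Kn α n) (Kn α n) q)) g)
      = (((KFn α n).filter (fun w => p * w * q ∈ dcosOf (Kn α n) (Kn α n) z)).card : ℂ)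
          / ((KFn α n).card : ℂ) := by
  rw [sigma_eq]
  have h1 := card_dcos α n p
  have h2 := card_dcos α n q
  have h3 := card_pairs α n p q z
  have hK1 : (1 : P3) ∈ KFn α n := mem_KFn.mpr (one_mem _)
  have hKne : ((KFn α n).card : ℂ) ≠ 0 := by
    exact_mod_cast Finset.card_ne_zero_of_mem hK1
  have hFp1 : (1 : P3) ∈ FFn α n p := by
    refine Finset.mem_filter.mpr ⟨hK1, ?_⟩
    have e : p⁻¹ * 1 * p = 1 := by group
    rw [e]; exact one_mem _
  have hFq1 : (1 : P3) ∈ FFn α n q := by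
    refine Finset.mem_filter.mpr ⟨hK1, ?_⟩
    have e : q⁻¹ * 1 * q = 1 := by group
    rw [e]; exact one_mem _
  have hFpne : ((FFn α n p).card : ℂ) ≠ 0 := by
    exact_mod_cast Finset.card_ne_zero_of_mem hFp1
  have hFqne : ((FFn α n q).card : ℂ) ≠ 0 := by
    exact_mod_cast Finset.card_ne_zero_of_mem hFq1
  have hDpne : ((DFn α n p).card : ℂ) ≠ 0 := by
    exact_mod_cast Finset.card_ne_zero_of_mem (mem_DFn.mpr (self_mem_dcos _ _ p))
  have hDqne : ((DFn α n q).card : ℂ) ≠ 0 := by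
    exact_mod_cast Finset.card_ne_zero_of_mem (mem_DFn.mpr (self_mem_dcos _ _ q))
  have c1 : ((DFn α n p).card : ℂ) * ((FFn α n p).card : ℂ) = ((KFn α n).card : ℂ) ^ 2 := by
    exact_mod_cast h1
  have c2 : ((DFn α n q).card : ℂ) * ((FFn α n q).card : ℂ) = ((KFn α n).card : ℂ) ^ 2 := by
    exact_mod_cast h2
  have c3 : ((((DFn α n p) ×ˢ (DFn α n q)).filter
        (fun uv : P3 × P3 => uv.1 * uv.2 ∈ dcosOf (Kn α n) (Kn α n) z)).card : ℂ)
      * (((FFn α n p).card : ℂ) * ((FFn α n q).card : ℂ))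
      = ((KFn α n).card : ℂ) ^ 3
        * (((KFn α n).filter (fun w => p * w * q ∈ dcosOf (Kn α n) (Kn α n) z)).card : ℂ) := by
    exact_mod_cast h3
  set PgC := ((((DFn α n p) ×ˢ (DFn α n q)).filter
      (fun uv : P3 × P3 => uv.1 * uv.2 ∈ dcosOf (Kn α n) (Kn α n) z)).card : ℂ)
  set GWC := (((KFn α n).filter
      (fun w => p * w * q ∈ dcosOf (Kn α n) (Kn α n) z)).card : ℂ)
  set KC := ((KFn α n).card : ℂ)
  set DpC := ((DFn α n p).card : ℂ)
  set DqC := ((DFn α n q).card : ℂ)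
  set FpC := ((FFn α n p).card : ℂ)
  set FqC := ((FFn α n q).card : ℂ)
  have key : PgC * KC * (FpC * FqC) = GWC * DpC * DqC * (FpC * FqC) := by
    linear_combination KC * c3 - GWC * DqC * FqC * c1 - GWC * KC ^ 2 * c2
  have key2 : PgC * KC = GWC * DpC * DqC :=
    mul_right_cancel₀ (mul_ne_zero hFpne hFqne) key
  field_simp
  linear_combination key2
end Sigma

section Comb
open Finset
open scoped Classical

lemma perm_inv_fix {d : Perm ℕ} {x : ℕ} (h : d x = x) : d⁻¹ x = x :=
  d.injective (by rw [perm_apply_inv_self', h])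

lemma conj_eq {c t d h pi qi : Perm ℕ} (h1 : c * pi = pi * c) (h2 : qi * d = d * qi)
    (h3 : c * t * d = h) : pi * h * qi = c * (pi * t * qi) * d := by
  rw [← h3]
  have e : c * (pi * t * qi) * d = (c * pi) * t * (qi * d) := by group
  rw [e, h1, h2]
  group

lemma good_mem (α m j : ℕ) (p q : P3)
    (hp : p ∈ (fixGe m).prod ((fixGe m).prod (fixGe m)))
    (hq : q ∈ (fixGe m).prod ((fixGe m).prod (fixGe m)))
    (hj : max α m ≤ j) {n : ℕ} (hn : α + 2 * j ≤ n)
    {h : Perm ℕ} (hh : h ∈ (fixLt α ⊓ fixGe n : Subgroup (Perm ℕ)))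
    (hgood : ∀ x, α ≤ x → x < max α m → max α m ≤ h x) :
    p * diag3 h * q ∈ dcosOf (Kn α n) (Kn α n) (p * ThetaP α j * q) := by
  set M := max α m with hM
  have hαM : α ≤ M := le_max_left α m
  have hmM : m ≤ M := le_max_right α m
  have hMj : M ≤ α + j := le_trans hj (Nat.le_add_left j α)
  have hMjn : M + j ≤ n := by omega
  have hMn : M ≤ n := by omega
  obtain ⟨hh1, hh2⟩ := Subgroup.mem_inf.mp hh
  have hhinv : h⁻¹ ∈ (fixLt α ⊓ fixGe n : Subgroup (Perm ℕ)) :=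
    inv_mem (Subgroup.mem_inf.mpr ⟨hh1, hh2⟩)
  obtain ⟨hi1, hi2⟩ := Subgroup.mem_inf.mp hhinv
  -- the finite extension data
  set S : Finset ℕ := (Finset.Ico α M).image ⇑h⁻¹ with hS
  set B : Finset ℕ := Finset.Ico M n with hB
  have hSB : S ⊆ B := by
    intro t ht
    obtain ⟨y, hy, rfl⟩ := Finset.mem_image.mp ht
    rw [Finset.mem_Ico] at hy
    rw [hB, Finset.mem_Ico]
    have h1 : α ≤ h⁻¹ y := fixLt_ge hi1 hy.1
    have h2 : h⁻¹ y < n := fixGe_lt hi2 (lt_of_lt_of_le hy.2 hMn)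
    have h3 : M ≤ h⁻¹ y := by
      by_contra hc
      push_neg at hc
      have := hgood (h⁻¹ y) h1 hc
      rw [perm_apply_inv_self'] at this
      omega
    exact ⟨h3, h2⟩
  have hinj : ∀ x ∈ S, ∀ y ∈ S, h x + j = h y + j → x = y := by
    intro x _ y _ he
    exact h.injective (by omega)
  have hfB : ∀ t ∈ S, h t + j ∈ B := by
    intro t ht
    obtain ⟨y, hy, rfl⟩ := Finset.mem_image.mp ht
    rw [Finset.mem_Ico] at hy
    rw [perm_apply_inv_self', hB, Finset.mem_Ico]
    omega
  obtain ⟨d, hd1, hd2⟩ := ext_perm B S (fun t => h t + j) hSB hinj hfB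
  have hd1' : ∀ y, α ≤ y → y < M → d (h⁻¹ y) = y + j := by
    intro y hy1 hy2
    have hmem : h⁻¹ y ∈ S := Finset.mem_image.mpr ⟨y, Finset.mem_Ico.mpr ⟨hy1, hy2⟩, rfl⟩
    rw [hd1 _ hmem, perm_apply_inv_self']
  have hdfix : ∀ x, x < M ∨ n ≤ x → d x = x := by
    intro x hx
    by_contra hc
    have := hd2 x hc
    rw [hB, Finset.mem_Ico, Finset.mem_Ico] at this
    omega
  set c : Perm ℕ := h * d⁻¹ * (theta α j)⁻¹ with hc
  have hcθd : c * theta α j * d = h := by rw [hc]; group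
  have hcfix : ∀ x, x < M ∨ n ≤ x → c x = x := by
    intro x hx
    have happ : c x = h (d⁻¹ ((theta α j)⁻¹ x)) := rfl
    rw [theta_inv] at happ
    rcases hx with hx | hx
    · by_cases hxα : x < α
      · rw [happ, theta_fix (Or.inl hxα), perm_inv_fix (hdfix x (Or.inl hx)), hh1 x hxα]
      · push_neg at hxα
        have hθ : theta α j x = x + j := theta_apply_low hxα (by omega)
        have hdinv : d⁻¹ (x + j) = h⁻¹ x := by
          have e := hd1' x hxα hx
          rw [← e, perm_inv_apply_self']
        rw [happ, hθ, hdinv, perm_apply_inv_self']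
    · rw [happ, theta_fix (Or.inr (by omega)), perm_inv_fix (hdfix x (Or.inr hx)),
        hh2 x hx]
  -- memberships
  have hcK : c ∈ (fixLt α ⊓ fixGe n : Subgroup (Perm ℕ)) :=
    Subgroup.mem_inf.mpr ⟨fun i hi => hcfix i (Or.inl (lt_of_lt_of_le hi hαM)),
      fun x hx => hcfix x (Or.inr hx)⟩
  have hdK : d ∈ (fixLt α ⊓ fixGe n : Subgroup (Perm ℕ)) :=
    Subgroup.mem_inf.mpr ⟨fun i hi => hdfix i (Or.inl (lt_of_lt_of_le hi hαM)),
      fun x hx => hdfix x (Or.inr hx)⟩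
  -- commutation
  have hcsupp : ∀ x : ℕ, c x ≠ x → m ≤ x := by
    intro x hx
    by_contra hc2
    push_neg at hc2
    exact hx (hcfix x (Or.inl (lt_of_lt_of_le hc2 hmM)))
  have hdsupp : ∀ x : ℕ, d x ≠ x → m ≤ x := by
    intro x hx
    by_contra hc2
    push_neg at hc2
    exact hx (hdfix x (Or.inl (lt_of_lt_of_le hc2 hmM)))
  have hcp1 : c * p.1 = p.1 * c := ((commute_of_fix hp.1 hcsupp).symm).eq
  have hcp2 : c * p.2.1 = p.2.1 * c := ((commute_of_fix hp.2.1 hcsupp).symm).eq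
  have hcp3 : c * p.2.2 = p.2.2 * c := ((commute_of_fix hp.2.2 hcsupp).symm).eq
  have hdq1 : q.1 * d = d * q.1 := (commute_of_fix hq.1 hdsupp).eq
  have hdq2 : q.2.1 * d = d * q.2.1 := (commute_of_fix hq.2.1 hdsupp).eq
  have hdq3 : q.2.2 * d = d * q.2.2 := (commute_of_fix hq.2.2 hdsupp).eq
  refine ⟨diag3 c, Subgroup.mem_map.mpr ⟨c, hcK, rfl⟩,
    diag3 d, Subgroup.mem_map.mpr ⟨d, hdK, rfl⟩, ?_⟩
  refine Prod.ext ?_ (Prod.ext ?_ ?_)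
  · show p.1 * h * q.1 = c * (p.1 * theta α j * q.1) * d
    exact conj_eq hcp1 hdq1 hcθd
  · show p.2.1 * h * q.2.1 = c * (p.2.1 * theta α j * q.2.1) * d
    exact conj_eq hcp2 hdq2 hcθd
  · show p.2.2 * h * q.2.2 = c * (p.2.2 * theta α j * q.2.2) * d
    exact conj_eq hcp3 hdq3 hcθd

/-- transfer of filters along `diag3` -/
lemma card_filter_KFn (α n : ℕ) (P : P3 → Prop) :
    ((KFn α n).filter (fun w => P w)).card
      = ((KB_finite α n).toFinset.filter (fun h : Perm ℕ => P (diag3 h))).card := by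
  apply Finset.card_bij' (i := fun g _ => g.1) (j := fun h _ => diag3 h)
  · intro g hg
    obtain ⟨hgK, hgP⟩ := Finset.mem_filter.mp hg
    obtain ⟨h, hmem, he⟩ := mem_KFn.mp hgK
    have e1 : g.1 = h := by rw [← he]; rfl
    refine Finset.mem_filter.mpr ⟨?_, ?_⟩
    · rw [Set.Finite.mem_toFinset, e1]; exact hmem
    · have : diag3 g.1 = g := by rw [e1, he]
      rw [this]; exact hgP
  · intro h hh
    obtain ⟨hhK, hhP⟩ := Finset.mem_filter.mp hh
    rw [Set.Finite.mem_toFinset] at hhK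
    exact Finset.mem_filter.mpr ⟨mem_KFn.mpr (Subgroup.mem_map.mpr ⟨h, hhK, rfl⟩), hhP⟩
  · intro g hg
    obtain ⟨hgK, _⟩ := Finset.mem_filter.mp hg
    obtain ⟨h, hmem, he⟩ := mem_KFn.mp hgK
    have e1 : g.1 = h := by rw [← he]; rfl
    rw [e1, he]
  · intro h _
    rfl

lemma card_KFn (α n : ℕ) : (KFn α n).card = (KB_finite α n).toFinset.card := by
  have h := card_filter_KFn α n (fun _ => True)
  simpa using h

lemma swap_mem_KB {α n y1 y2 : ℕ} (h1 : α ≤ y1) (h2 : y1 < n) (h3 : α ≤ y2) (h4 : y2 < n) :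
    Equiv.swap y1 y2 ∈ (fixLt α ⊓ fixGe n : Subgroup (Perm ℕ)) := by
  refine Subgroup.mem_inf.mpr ⟨fun i hi => ?_, fun x hx => ?_⟩
  · exact Equiv.swap_apply_of_ne_of_ne (by omega) (by omega)
  · exact Equiv.swap_apply_of_ne_of_ne (by omega) (by omega)

lemma card_stab_le (α n : ℕ) {y1 y2 x : ℕ} (hx : α ≤ x) (hx2 : x < n)
    (h1 : α ≤ y1) (h2 : y1 < n) (h3 : α ≤ y2) (h4 : y2 < n) :
    ((KB_finite α n).toFinset.filter (fun h : Perm ℕ => h x = y1)).card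
      ≤ ((KB_finite α n).toFinset.filter (fun h : Perm ℕ => h x = y2)).card := by
  apply Finset.card_le_card_of_injOn (fun h => Equiv.swap y1 y2 * h)
  · intro g hg
    obtain ⟨hgK, hge⟩ := Finset.mem_filter.mp hg
    rw [Set.Finite.mem_toFinset] at hgK
    refine Finset.mem_filter.mpr ⟨?_, ?_⟩
    · rw [Set.Finite.mem_toFinset]
      exact mul_mem (swap_mem_KB h1 h2 h3 h4) hgK
    · show Equiv.swap y1 y2 (g x) = y2
      rw [hge, Equiv.swap_apply_left]
  · intro g1 _ g2 _ he
    exact mul_left_cancel he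

lemma card_stab (α n : ℕ) {x y : ℕ} (hx : α ≤ x) (hx2 : x < n) (hy : α ≤ y) (hy2 : y < n) :
    ((KB_finite α n).toFinset.filter (fun h : Perm ℕ => h x = y)).card * (n - α)
      = (KB_finite α n).toFinset.card := by
  have hmap : ∀ h ∈ (KB_finite α n).toFinset, (h : Perm ℕ) x ∈ Finset.Ico α n := by
    intro h hh
    rw [Set.Finite.mem_toFinset] at hh
    obtain ⟨hh1, hh2⟩ := Subgroup.mem_inf.mp hh
    exact Finset.mem_Ico.mpr ⟨fixLt_ge hh1 hx, fixGe_lt hh2 hx2⟩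
  have h := Finset.card_eq_sum_card_fiberwise hmap
  have h2 : ∀ y' ∈ Finset.Ico α n,
      ((KB_finite α n).toFinset.filter (fun h : Perm ℕ => h x = y')).card
        = ((KB_finite α n).toFinset.filter (fun h : Perm ℕ => h x = y)).card := by
    intro y' hy'
    rw [Finset.mem_Ico] at hy'
    exact le_antisymm (card_stab_le α n hx hx2 hy'.1 hy'.2 hy hy2)
      (card_stab_le α n hx hx2 hy hy2 hy'.1 hy'.2)
  rw [Finset.sum_congr rfl h2, Finset.sum_const, smul_eq_mul, Nat.card_Ico] at h
  rw [mul_comm] at h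
  exact h.symm

end Comb

/-- **Concentration of convolutions.** -/
theorem concentration_of_convolutions (α m : ℕ) (p q : P3)
    (hp : p ∈ (fixGe m).prod ((fixGe m).prod (fixGe m)))
    (hq : q ∈ (fixGe m).prod ((fixGe m).prod (fixGe m))) :
    ∃ j₀ : ℕ, m ≤ j₀ ∧ ∀ j : ℕ, j₀ ≤ j →
      Filter.Tendsto
        (fun n : ℕ => ∑ᶠ g ∈ dcosOf (Kn α n) (Kn α n) (p * ThetaP α j * q),
          conv (deltaFn (dcosOf (Kn α n) (Kn α n) p))
            (deltaFn (dcosOf (Kn α n) (Kn α n) q)) g)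
        Filter.atTop (nhds (1 : ℂ)) := by
  classical
  refine ⟨max α m, le_max_right α m, ?_⟩
  intro j hj
  set M := max α m with hM
  -- the value of the sum, as a real quotient
  have hval : ∀ n : ℕ,
      (∑ᶠ g ∈ dcosOf (Kn α n) (Kn α n) (p * ThetaP α j * q),
        conv (deltaFn (dcosOf (Kn α n) (Kn α n) p))
          (deltaFn (dcosOf (Kn α n) (Kn α n) q)) g)
      = Complex.ofReal
          ((((KB_finite α n).toFinset.filter (fun h : Perm ℕ =>
            p * diag3 h * q ∈ dcosOf (Kn α n) (Kn α n) (p * ThetaP α j * q))).card : ℝ)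
          / ((KB_finite α n).toFinset.card : ℝ)) := by
    intro n
    rw [sigma_val α n p q (p * ThetaP α j * q),
      card_filter_KFn α n
        (fun w => p * w * q ∈ dcosOf (Kn α n) (Kn α n) (p * ThetaP α j * q)),
      card_KFn]
    push_cast
    ring
  have hKpos : ∀ n : ℕ, 0 < ((KB_finite α n).toFinset.card) := fun n =>
    Finset.card_pos.mpr ⟨1, (Set.Finite.mem_toFinset _).mpr (one_mem _)⟩
  -- upper bound
  have hup : ∀ n : ℕ,
      ((((KB_finite α n).toFinset.filter (fun h : Perm ℕ =>
          p * diag3 h * q ∈ dcosOf (Kn α n) (Kn α n) (p * ThetaP α j * q))).card : ℝ)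
        / ((KB_finite α n).toFinset.card : ℝ)) ≤ 1 := by
    intro n
    apply div_le_one_of_le₀
    · exact_mod_cast Finset.card_filter_le _ _
    · positivity
  -- lower bound
  have hlow : ∀ n : ℕ, α + 2 * j + 1 ≤ n →
      1 - (((M - α) ^ 2 : ℕ) : ℝ) / ((n - α : ℕ) : ℝ)
        ≤ ((((KB_finite α n).toFinset.filter (fun h : Perm ℕ =>
            p * diag3 h * q ∈ dcosOf (Kn α n) (Kn α n) (p * ThetaP α j * q))).card : ℝ)
          / ((KB_finite α n).toFinset.card : ℝ)) := by
    intro n hn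
    set KBF := (KB_finite α n).toFinset with hKBF
    set GWB := KBF.filter (fun h : Perm ℕ =>
        p * diag3 h * q ∈ dcosOf (Kn α n) (Kn α n) (p * ThetaP α j * q)) with hGWB
    set BadB := KBF.filter
      (fun h : Perm ℕ => ∃ x ∈ Finset.Ico α M, h x ∈ Finset.Ico α M) with hBadB
    have hsplit : KBF.card ≤ GWB.card + BadB.card := by
      have hsub : KBF ⊆ GWB ∪ BadB := by
        intro h hhK
        have hhK' : h ∈ (fixLt α ⊓ fixGe n : Subgroup (Perm ℕ)) :=
          SetLike.mem_coe.mp ((Set.Finite.mem_toFinset _).mp hhK)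
        by_cases hgood : ∀ x, α ≤ x → x < M → M ≤ h x
        · apply Finset.mem_union_left
          rw [hGWB, Finset.mem_filter]
          exact ⟨hhK, good_mem α m j p q hp hq hj (by omega) hhK' hgood⟩
        · apply Finset.mem_union_right
          push_neg at hgood
          obtain ⟨x, hx1, hx2, hx3⟩ := hgood
          rw [hBadB, Finset.mem_filter]
          have hge : α ≤ h x := fixLt_ge (Subgroup.mem_inf.mp hhK').1 hx1
          exact ⟨hhK, ⟨x, Finset.mem_Ico.mpr ⟨hx1, hx2⟩, Finset.mem_Ico.mpr ⟨hge, by omega⟩⟩⟩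
      calc KBF.card ≤ (GWB ∪ BadB).card := Finset.card_le_card hsub
        _ ≤ GWB.card + BadB.card := Finset.card_union_le _ _
    have hMj : M ≤ j := hj
    have hbad : BadB.card * (n - α) ≤ (M - α) * (M - α) * KBF.card := by
      have hsub2 : BadB ⊆ (Finset.Ico α M).biUnion (fun x =>
          (Finset.Ico α M).biUnion (fun y =>
            KBF.filter (fun h : Perm ℕ => h x = y))) := by
        intro h hmem
        rw [hBadB, Finset.mem_filter] at hmem
        obtain ⟨hhK, x, hx, hhx⟩ := hmem
        exact Finset.mem_biUnion.mpr ⟨x, hx, Finset.mem_biUnion.mpr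
          ⟨h x, hhx, Finset.mem_filter.mpr ⟨hhK, rfl⟩⟩⟩
      have h1 : BadB.card ≤ ∑ x ∈ Finset.Ico α M, ∑ y ∈ Finset.Ico α M,
          (KBF.filter (fun h : Perm ℕ => h x = y)).card := by
        calc BadB.card ≤ _ := Finset.card_le_card hsub2
          _ ≤ ∑ x ∈ Finset.Ico α M, ((Finset.Ico α M).biUnion (fun y =>
                KBF.filter (fun h : Perm ℕ => h x = y))).card := Finset.card_biUnion_le
          _ ≤ _ := Finset.sum_le_sum (fun x _ => Finset.card_biUnion_le)
      have h2 := Nat.mul_le_mul_right (n - α) h1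
      rw [Finset.sum_mul] at h2
      have h3 : ∀ x ∈ Finset.Ico α M,
          (∑ y ∈ Finset.Ico α M, (KBF.filter (fun h : Perm ℕ => h x = y)).card) * (n - α)
            = (M - α) * KBF.card := by
        intro x hx
        rw [Finset.sum_mul]
        rw [Finset.mem_Ico] at hx
        have h4 : ∀ y ∈ Finset.Ico α M,
            (KBF.filter (fun h : Perm ℕ => h x = y)).card * (n - α) = KBF.card := by
          intro y hy
          rw [Finset.mem_Ico] at hy
          exact card_stab α n (by omega) (by omega) (by omega) (by omega)
        rw [Finset.sum_congr rfl h4, Finset.sum_const, smul_eq_mul, Nat.card_Ico]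
      rw [Finset.sum_congr rfl h3, Finset.sum_const, smul_eq_mul, Nat.card_Ico] at h2
      calc BadB.card * (n - α) ≤ (M - α) * ((M - α) * KBF.card) := h2
        _ = (M - α) * (M - α) * KBF.card := by ring
    have hKposn : (0:ℝ) < (KBF.card : ℝ) := by exact_mod_cast hKpos n
    have hNpos : (0:ℝ) < ((n - α : ℕ) : ℝ) := by
      have : 0 < n - α := by omega
      exact_mod_cast this
    have e1 : (BadB.card : ℝ) / (KBF.card : ℝ)
        ≤ (((M - α) ^ 2 : ℕ) : ℝ) / ((n - α : ℕ) : ℝ) := by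
      rw [div_le_div_iff₀ hKposn hNpos]
      calc (BadB.card : ℝ) * ((n - α : ℕ) : ℝ)
          = ((BadB.card * (n - α) : ℕ) : ℝ) := by push_cast; ring
        _ ≤ (((M - α) * (M - α) * KBF.card : ℕ) : ℝ) := by exact_mod_cast hbad
        _ = (((M - α) ^ 2 : ℕ) : ℝ) * (KBF.card : ℝ) := by push_cast; ring
    have e2 : (KBF.card : ℝ) ≤ (GWB.card : ℝ) + (BadB.card : ℝ) := by exact_mod_cast hsplit
    have e3 : 1 - (BadB.card : ℝ) / (KBF.card : ℝ)
        ≤ (GWB.card : ℝ) / (KBF.card : ℝ) := by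
      rw [sub_le_iff_le_add, ← add_div, le_div_iff₀ hKposn, one_mul]
      linarith
    linarith
  -- squeeze in ℝ
  have htend0 : Filter.Tendsto
      (fun n : ℕ => (((M - α) ^ 2 : ℕ) : ℝ) / ((n - α : ℕ) : ℝ))
      Filter.atTop (nhds 0) := by
    apply Filter.Tendsto.div_atTop tendsto_const_nhds
    exact tendsto_natCast_atTop_atTop.comp (Filter.tendsto_sub_atTop_nat α)
  have hrt : Filter.Tendsto
      (fun n : ℕ =>
        ((((KB_finite α n).toFinset.filter (fun h : Perm ℕ =>
            p * diag3 h * q ∈ dcosOf (Kn α n) (Kn α n) (p * ThetaP α j * q))).card : ℝ)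
          / ((KB_finite α n).toFinset.card : ℝ)))
      Filter.atTop (nhds 1) := by
    apply tendsto_of_tendsto_of_tendsto_of_le_of_le'
      (g := fun n : ℕ => 1 - (((M - α) ^ 2 : ℕ) : ℝ) / ((n - α : ℕ) : ℝ))
      (h := fun _ : ℕ => (1:ℝ))
    · simpa using tendsto_const_nhds.sub htend0
    · exact tendsto_const_nhds
    · exact Filter.eventually_atTop.mpr ⟨α + 2 * j + 1, hlow⟩
    · exact Filter.Eventually.of_forall hup
  have hC := (Complex.continuous_ofReal.tendsto 1).comp hrt
  rw [Complex.ofReal_one] at hC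
  exact hC.congr (fun n => (hval n).symm)
end
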